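/- Let n ≥ δ ≥ 2, k = n−δ+1, and F = [γ_0, …, γ_{n−1}] an m×n Ferrers diagram such that (1) γ_k ≥ n or γ_k − k ≥ γ_i − i for all 0 ≤ i ≤ k−1, and (2) γ_{k+1} ≥ n. Then for every prime power q there exists a linear FDRM code supported on F with dimension Σ_{i=0}^{k−1} γ_i and minimum rank distance δ; this dimension attains the Etzion–Silberstein upper bound, so the code is optimal. -/

import Mathlib

open Polynomial Matrix

namespace Stmt16Aux

set_option linter.unusedSectionVars false
set_option linter.unusedTactic false
set_option linter.unreachableTactic false
set_option maxHeartbeats 1000000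


variable (F : Type*) [Field F] [Fintype F]

/-- Degree-`D` extension of the finite field `F`: splitting field of `X^(q^D) - X`. -/
noncomputable def ExtF (D : ℕ) : Type _ :=
  SplittingField (X ^ (Fintype.card F) ^ D - X : F[X])

noncomputable instance (D : ℕ) : Field (ExtF F D) :=
  inferInstanceAs (Field (SplittingField _))

noncomputable instance (D : ℕ) : Algebra F (ExtF F D) :=
  inferInstanceAs (Algebra F (SplittingField _))

instance (D : ℕ) : IsSplittingField F (ExtF F D) (X ^ (Fintype.card F) ^ D - X) :=
  Polynomial.IsSplittingField.splittingField _

instance (D : ℕ) : FiniteDimensional F (ExtF F D) := by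
  exact inferInstanceAs (FiniteDimensional F (SplittingField (X ^ (Fintype.card F) ^ D - X : F[X])))

instance (D : ℕ) : Finite (ExtF F D) := Module.finite_of_finite F

theorem ExtF.finrank {D : ℕ} (h : D ≠ 0) : Module.finrank F (ExtF F D) = D := by
  haveI : Fintype (ExtF F D) := Fintype.ofFinite (ExtF F D)
  set q := Fintype.card F with hq
  obtain ⟨p, hpc⟩ := CharP.exists F
  haveI : CharP F p := hpc
  obtain ⟨e, hp, hcard⟩ := FiniteField.card F p
  haveI : Fact p.Prime := ⟨hp⟩
  haveI : CharP (ExtF F D) p := charP_of_injective_algebraMap (algebraMap F (ExtF F D)).injective p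
  set g_poly := (X ^ q ^ D - X : F[X]) with hg
  have hq1 : 1 < q := Fintype.one_lt_card
  have aux : g_poly ≠ 0 := FiniteField.X_pow_card_pow_sub_X_ne_zero _ h hq1
  have hpq : p ∣ q ^ D := by
    refine dvd_pow ?_ h
    rw [hq, hcard]; exact dvd_pow_self p e.ne_zero
  have key : Fintype.card (g_poly.rootSet (ExtF F D)) = g_poly.natDegree :=
    card_rootSet_eq_natDegree (galois_poly_separable p _ hpq)
      (SplittingField.splits g_poly)
  have nat_degree_eq : g_poly.natDegree = q ^ D :=
    FiniteField.X_pow_card_pow_sub_X_natDegree_eq _ h hq1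
  rw [nat_degree_eq] at key
  suffices g_poly.rootSet (ExtF F D) = Set.univ by
    simp_rw [this, ← Fintype.ofEquiv_card (Equiv.Set.univ _)] at key
    rw [@Module.card_eq_pow_finrank F _ _ _ _ _ (_)] at key
    exact Nat.pow_right_injective hq1 key
  rw [Set.eq_univ_iff_forall]
  suffices ∀ (x) (_ : x ∈ (⊤ : Subalgebra F (ExtF F D))),
      x ∈ (X ^ q ^ D - X : F[X]).rootSet (ExtF F D) by simpa using this
  rw [← IsSplittingField.adjoin_rootSet (ExtF F D) g_poly]
  simp_rw [Algebra.mem_adjoin_iff]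
  intro x hx
  refine Subring.closure_induction ?_ ?_ ?_ ?_ ?_ ?_ hx <;> simp_rw [mem_rootSet_of_ne (p := X ^ q ^ D - X) aux]
  · rintro x (⟨r, rfl⟩ | hx)
    · simp only [g_poly, map_sub, map_pow, aeval_X]
      rw [← map_pow, FiniteField.pow_card_pow, sub_self]
    · dsimp only [ExtF] at hx
      exact (mem_rootSet_of_ne aux).mp hx
  · rw [← coeff_zero_eq_aeval_zero']
    simp only [g_poly, coeff_X_pow, coeff_X_zero, sub_zero, _root_.map_eq_zero, ite_eq_right_iff,
      one_ne_zero, coeff_sub]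
    intro hn
    exact absurd hn.symm (pow_ne_zero D (by omega))
  · simp [g_poly]
  · have hqD : q ^ D = p ^ (e * D) := by rw [hq, hcard, ← pow_mul]
    simp only [g_poly, aeval_X_pow, aeval_X, map_sub, sub_eq_zero, hqD]
    intro x y _ _ hx hy
    rw [add_pow_char_pow, hx, hy]
  · have hqD : q ^ D = p ^ (e * D) := by rw [hq, hcard, ← pow_mul]
    intro x _ hx
    simp only [g_poly, sub_eq_zero, aeval_X_pow, aeval_X, map_sub, sub_neg_eq_add, hqD] at *
    rw [neg_pow, hx, neg_one_pow_char_pow]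
    simp
  · simp only [g_poly, aeval_X_pow, aeval_X, map_sub, mul_pow, sub_eq_zero]
    intro x y _ _ hx hy
    rw [hx, hy]



set_option linter.unusedSectionVars false
variable {F : Type*} [Field F] [Fintype F] {K : Type*} [Field K] [Algebra F K]

theorem qpow_add (x y : K) (s : ℕ) :
    (x + y) ^ (Fintype.card F) ^ s = x ^ (Fintype.card F) ^ s + y ^ (Fintype.card F) ^ s := by
  obtain ⟨p, hpc⟩ := CharP.exists F
  haveI : CharP F p := hpc
  obtain ⟨e, hp, hcard⟩ := FiniteField.card F p
  haveI : Fact p.Prime := ⟨hp⟩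
  haveI : CharP K p := charP_of_injective_algebraMap (algebraMap F K).injective p
  rw [hcard, ← pow_mul, add_pow_char_pow]

theorem qpow_smul (a : F) (x : K) (s : ℕ) :
    (a • x) ^ (Fintype.card F) ^ s = a • x ^ (Fintype.card F) ^ s := by
  rw [Algebra.smul_def, Algebra.smul_def, mul_pow, ← map_pow, FiniteField.pow_card_pow]

/-- The `F`-linear map `x ↦ ∑ i, c i * x ^ (q ^ t i)` on `K`. -/
noncomputable def lpoly {N : ℕ} (c : Fin N → K) (t : Fin N → ℕ) : K →ₗ[F] K where
  toFun x := ∑ i, c i * x ^ (Fintype.card F) ^ (t i)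
  map_add' x y := by
    simp_rw [qpow_add, mul_add, Finset.sum_add_distrib]
  map_smul' a x := by
    simp_rw [qpow_smul, RingHom.id_apply, Finset.smul_sum, mul_smul_comm]

theorem lpoly_apply {N : ℕ} (c : Fin N → K) (t : Fin N → ℕ) (x : K) :
    lpoly (F := F) c t x = ∑ i, c i * x ^ (Fintype.card F) ^ (t i) := rfl

/-- Core counting lemma: a linearized polynomial with exponents at most `q ^ B`
vanishing on a subspace of dimension `> B` is zero. -/
theorem core [FiniteDimensional F K] {N B : ℕ} (c : Fin N → K) (t : Fin N → ℕ) (htinj : Function.Injective t)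
    (hB : ∀ i, t i ≤ B) (U : Submodule F K)
    (hU : ∀ x ∈ U, ∑ i, c i * x ^ (Fintype.card F) ^ (t i) = 0)
    (hrank : B < Module.finrank F U) : c = 0 := by
  haveI : Finite K := Module.finite_of_finite F
  haveI : Fintype K := Fintype.ofFinite K
  classical
  set q := Fintype.card F with hq
  have hq1 : 1 < q := Fintype.one_lt_card
  by_contra hc
  obtain ⟨i₀, hi₀⟩ : ∃ i, c i ≠ 0 := by
    by_contra h; push_neg at h; exact hc (funext h)
  set P : K[X] := ∑ i, C (c i) * X ^ (q ^ t i) with hP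
  have hcoeff : P.coeff (q ^ t i₀) = c i₀ := by
    rw [hP, finset_sum_coeff]
    rw [Finset.sum_eq_single i₀]
    · simp
    · intro i _ hne
      rw [coeff_C_mul, coeff_X_pow, if_neg, mul_zero]
      intro hEq
      exact hne (htinj (Nat.pow_right_injective hq1 hEq.symm))
    · simp
  have hPne : P ≠ 0 := fun h => hi₀ (by rw [← hcoeff, h, coeff_zero])
  have hdeg : P.natDegree ≤ q ^ B := by
    refine natDegree_sum_le_of_forall_le _ _ fun i _ => ?_
    refine le_trans (natDegree_C_mul_le _ _) ?_
    rw [natDegree_X_pow]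
    exact Nat.pow_le_pow_right (by omega) (hB i)
  have hroot : ∀ x ∈ U, P.IsRoot x := by
    intro x hx
    have := hU x hx
    simpa [P, IsRoot, eval_finset_sum] using this
  have hsub : (U : Set K).toFinset ⊆ P.roots.toFinset := by
    intro x hx
    rw [Set.mem_toFinset] at hx
    rw [Multiset.mem_toFinset, mem_roots hPne]
    exact hroot x hx
  have hcardU : Fintype.card U = q ^ Module.finrank F U := Module.card_eq_pow_finrank
  have hchain : q ^ Module.finrank F U ≤ q ^ B := by
    calc q ^ Module.finrank F U = Fintype.card U := hcardU.symm
      _ = (U : Set K).toFinset.card := by rw [Set.toFinset_card]; rfl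
      _ ≤ P.roots.toFinset.card := Finset.card_le_card hsub
      _ ≤ Multiset.card P.roots := Multiset.toFinset_card_le _
      _ ≤ P.natDegree := P.card_roots' 
      _ ≤ q ^ B := hdeg
  exact absurd hchain (not_le.mpr (Nat.pow_lt_pow_right hq1 hrank))


/-- evaluation at a fixed point, linear in the coefficient vector -/
noncomputable def evAt {k : ℕ} (x : K) : (Fin k → K) →ₗ[F] K where
  toFun c := ∑ s, c s * x ^ (Fintype.card F) ^ (s : ℕ)
  map_add' c c' := by simp [add_mul, Finset.sum_add_distrib]
  map_smul' a c := by simp [Finset.smul_sum, smul_mul_assoc]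

theorem evAt_apply {k : ℕ} (x : K) (c : Fin k → K) :
    evAt (F := F) x c = ∑ s, c s * x ^ (Fintype.card F) ^ (s : ℕ) := rfl

theorem evAt_eq_lpoly {k : ℕ} (x : K) (c : Fin k → K) :
    evAt (F := F) x c = lpoly (F := F) c Fin.val x := rfl

/-- the flag subspace spanned by the first `g` basis vectors -/
noncomputable def Vsp {D : ℕ} (b : Module.Basis (Fin D) F K) (g : ℕ) : Submodule F K :=
  Submodule.span F (b '' {u : Fin D | (u : ℕ) < g})


theorem qpow_algebraMap (a : F) (s : ℕ) :
    (algebraMap F K a) ^ (Fintype.card F) ^ s = algebraMap F K a := by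
  rw [← map_pow, FiniteField.pow_card_pow]

/-- Frobenius power `x ↦ x ^ (q ^ t)` as a ring hom. -/
noncomputable def frobPowHom (F : Type*) [Field F] [Fintype F] (K : Type*) [Field K]
    [Algebra F K] (t : ℕ) : K →+* K where
  toFun x := x ^ (Fintype.card F) ^ t
  map_one' := one_pow _
  map_mul' x y := mul_pow x y _
  map_zero' := zero_pow (pow_ne_zero t Fintype.card_ne_zero)
  map_add' x y := qpow_add x y t

theorem frobPowHom_apply (t : ℕ) (x : K) :
    frobPowHom F K t x = x ^ (Fintype.card F) ^ t := rfl


theorem Vsp_mono {D : ℕ} (b : Module.Basis (Fin D) F K) {g g' : ℕ} (h : g ≤ g') :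
    Vsp (F := F) b g ≤ Vsp (F := F) b g' := by
  apply Submodule.span_mono
  apply Set.image_mono
  intro u hu
  simp only [Set.mem_setOf_eq] at hu ⊢
  omega

theorem Vsp_mul_pow {D : ℕ} (b : Module.Basis (Fin D) F K) (β : K) (hb : ∀ t : Fin D, b t = β ^ (t : ℕ))
    {g a : ℕ} (hga : g + a ≤ D) {x : K} (hx : x ∈ Vsp (F := F) b g) :
    β ^ a * x ∈ Vsp (F := F) b (g + a) := by
  have hle : Vsp (F := F) b g ≤
      Submodule.comap (LinearMap.mulLeft F (β ^ a)) (Vsp (F := F) b (g + a)) := by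
    rw [Vsp, Submodule.span_le]
    rintro _ ⟨u, hu, rfl⟩
    simp only [Set.mem_setOf_eq] at hu
    rw [SetLike.mem_coe, Submodule.mem_comap, LinearMap.mulLeft_apply]
    have hh : β ^ a * b u = b ⟨(u : ℕ) + a, by omega⟩ := by
      rw [hb, hb, ← pow_add]
      congr 1
      show a + (u : ℕ) = (u : ℕ) + a
      omega
    rw [hh]
    apply Submodule.subset_span
    refine ⟨⟨(u : ℕ) + a, by omega⟩, ?_, rfl⟩
    show (u : ℕ) + a < g + a
    omega
  exact hle hx
theorem repr_eq_zero_of_mem_Vsp {D : ℕ} {b : Module.Basis (Fin D) F K} {g : ℕ} {x : K}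
    (hx : x ∈ Vsp b g) {t : Fin D} (ht : g ≤ (t : ℕ)) : b.repr x t = 0 := by
  rw [Vsp, Module.Basis.mem_span_image] at hx
  by_contra h
  have : t ∈ (b.repr x).support := Finsupp.mem_support_iff.mpr h
  have := hx this
  simp only [Set.mem_setOf_eq] at this
  omega

theorem finrank_Vsp {D : ℕ} (b : Module.Basis (Fin D) F K) {g : ℕ} (hg : g ≤ D) :
    Module.finrank F (Vsp b g) = g := by
  have himg : b '' {u : Fin D | (u : ℕ) < g} =
      Set.range (fun v : Fin g => b ⟨v, lt_of_lt_of_le v.2 hg⟩) := by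
    ext x
    constructor
    · rintro ⟨u, hu, rfl⟩
      exact ⟨⟨u, hu⟩, by simp⟩
    · rintro ⟨v, rfl⟩
      exact ⟨⟨v, lt_of_lt_of_le v.2 hg⟩, v.2, rfl⟩
  rw [Vsp, himg, finrank_span_eq_card]
  · simp
  · exact b.linearIndependent.comp (fun v : Fin g => (⟨v, lt_of_lt_of_le v.2 hg⟩ : Fin D))
      (fun v w h => Fin.ext (by simpa [Fin.ext_iff] using h))

/-- zero-padding of coordinate vectors -/
noncomputable def pad {D m : ℕ} (hDm : D ≤ m) : (Fin D → F) →ₗ[F] (Fin m → F) where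
  toFun v i := if h : (i : ℕ) < D then v ⟨i, h⟩ else 0
  map_add' v w := by
    funext i; by_cases h : (i : ℕ) < D <;> simp [h]
  map_smul' a v := by
    funext i; by_cases h : (i : ℕ) < D <;> simp [h]

theorem main_construction [FiniteDimensional F K] {m n δ k D : ℕ} (γ : ℕ → ℕ)
    (b : Module.Basis (Fin D) F K) (η : Fin n → K)
    (hk1 : 1 ≤ k) (hkn : k < n) (hδ : δ + k = n + 1) (hDm : D ≤ m)
    (hγD : ∀ i, i < k → γ i ≤ D)
    (hγDge : ∀ j : Fin n, k < (j : ℕ) → D ≤ γ (j : ℕ))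
    (hηind : LinearIndependent F (fun i : Fin k => η (Fin.castLE hkn.le i)))
    (hηspan : n ≤ Module.finrank F (Submodule.span F (Set.range η)))
    (hcolk : ∀ c : Fin k → K,
      (∀ i : Fin k, evAt (F := F) (η (Fin.castLE hkn.le i)) c ∈ Vsp b (γ (i : ℕ))) →
      ∀ t : Fin D, γ k ≤ (t : ℕ) → b.repr (evAt (F := F) (η ⟨k, hkn⟩) c) t = 0) :
    ∃ C : Submodule F (Matrix (Fin m) (Fin n) F),
      Module.finrank F C = ∑ i ∈ Finset.range k, γ i ∧
      (∀ A ∈ C, ∀ (i : Fin m) (j : Fin n), γ (j : ℕ) ≤ (i : ℕ) → A i j = 0) ∧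
      (∀ A ∈ C, A ≠ 0 → δ ≤ A.rank) := by
  classical
  set q := Fintype.card F with hqdef
  -- the kernel bound for a nonzero coefficient vector
  have hker : ∀ c : Fin k → K, c ≠ 0 →
      Module.finrank F (LinearMap.ker (lpoly (F := F) c Fin.val)) ≤ k - 1 := by
    intro c hc
    by_contra h
    refine hc (core (B := k-1) c Fin.val Fin.val_injective (fun i => by have := i.2; omega)
      (LinearMap.ker (lpoly (F := F) c Fin.val))
      (fun x hx => by simpa [lpoly_apply] using hx) (by omega))
  -- Φ : K → F^m, injective
  set Φ : K →ₗ[F] (Fin m → F) := (pad hDm) ∘ₗ b.equivFun.toLinearMap with hΦdef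
  have hΦapply : ∀ (x : K) (i : Fin m),
      Φ x i = if h : (i : ℕ) < D then b.repr x ⟨i, h⟩ else 0 := by
    intro x i
    simp [hΦdef, pad, Module.Basis.equivFun_apply]
  have hΦinj : Function.Injective Φ := by
    intro x y hxy
    have hco : ∀ t : Fin D, b.repr x t = b.repr y t := by
      intro t
      have h2 := congrFun hxy (Fin.castLE hDm t)
      rw [hΦapply, hΦapply] at h2
      have ht : ((Fin.castLE hDm t : Fin m) : ℕ) < D := t.2
      rw [dif_pos ht, dif_pos ht] at h2
      have heq : (⟨((Fin.castLE hDm t : Fin m) : ℕ), ht⟩ : Fin D) = t := Fin.ext rfl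
      rwa [heq] at h2
    exact b.repr.injective (Finsupp.ext hco)
  -- Ψ
  set Ψ : (Fin k → K) →ₗ[F] Matrix (Fin m) (Fin n) F :=
    { toFun := fun c => Matrix.of fun i j => Φ (evAt (F := F) (η j) c) i
      map_add' := by
        intro c c'
        ext i j
        simp [Matrix.add_apply]
      map_smul' := by
        intro a c
        ext i j
        simp [Matrix.smul_apply] } with hΨdef
  have hΨapply : ∀ (c : Fin k → K) (i : Fin m) (j : Fin n),
      Ψ c i j = Φ (evAt (F := F) (η j) c) i := fun _ _ _ => rfl
  have hΨzero : ∀ c : Fin k → K, Ψ c = 0 → c = 0 := by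
    intro d h
    have hcols : ∀ j : Fin n, evAt (F := F) (η j) d = 0 := by
      intro j
      apply hΦinj
      rw [map_zero]
      funext i
      have h2 : Ψ d i j = 0 := by rw [h]; rfl
      rw [hΨapply] at h2
      simpa using h2
    have hle : Submodule.span F (Set.range η) ≤ LinearMap.ker (lpoly (F := F) d Fin.val) := by
      rw [Submodule.span_le]
      rintro _ ⟨j, rfl⟩
      rw [SetLike.mem_coe, LinearMap.mem_ker, ← evAt_eq_lpoly]
      exact hcols j
    refine core (B := k-1) d Fin.val Fin.val_injective (fun i => by have := i.2; omega)
      (LinearMap.ker (lpoly (F := F) d Fin.val))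
      (fun x hx => by simpa [lpoly_apply] using hx) ?_
    have := Submodule.finrank_mono hle
    omega
  have hΨinj : Function.Injective Ψ := by
    intro c c' h
    rw [← sub_eq_zero]
    exact hΨzero _ (by rw [map_sub, h, sub_self])
  -- Emap
  set Emap : (Fin k → K) →ₗ[F] (Fin k → K) :=
    LinearMap.pi (fun i => evAt (F := F) (η (Fin.castLE hkn.le i))) with hEdef
  have hEapply : ∀ (c : Fin k → K) (i : Fin k),
      Emap c i = evAt (F := F) (η (Fin.castLE hkn.le i)) c := fun _ _ => rfl
  have hEinj : Function.Injective Emap := by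
    intro c c' h
    rw [← sub_eq_zero]
    set d := c - c' with hd
    have hz : Emap d = 0 := by rw [map_sub, h, sub_self]
    have hle : Submodule.span F (Set.range (fun i : Fin k => η (Fin.castLE hkn.le i))) ≤
        LinearMap.ker (lpoly (F := F) d Fin.val) := by
      rw [Submodule.span_le]
      rintro _ ⟨i, rfl⟩
      rw [SetLike.mem_coe, LinearMap.mem_ker, ← evAt_eq_lpoly]
      rw [← hEapply d i, hz]
      rfl
    have hfr : Module.finrank F
        (Submodule.span F (Set.range (fun i : Fin k => η (Fin.castLE hkn.le i)))) = k := by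
      rw [finrank_span_eq_card hηind, Fintype.card_fin]
    refine core (B := k-1) d Fin.val Fin.val_injective (fun i => by have := i.2; omega)
      (LinearMap.ker (lpoly (F := F) d Fin.val))
      (fun x hx => by simpa [lpoly_apply] using hx) ?_
    have := Submodule.finrank_mono hle
    omega
  have hEsurj : Function.Surjective Emap := LinearMap.injective_iff_surjective.mp hEinj
  set e : (Fin k → K) ≃ₗ[F] (Fin k → K) := LinearEquiv.ofBijective Emap ⟨hEinj, hEsurj⟩
    with hedef
  -- θ
  set θ : (∀ i : Fin k, Vsp b (γ (i : ℕ))) →ₗ[F] (Fin k → K) :=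
    LinearMap.pi (fun i => (Vsp b (γ (i : ℕ))).subtype ∘ₗ LinearMap.proj i) with hθdef
  have hθapply : ∀ (v : ∀ i : Fin k, Vsp b (γ (i : ℕ))) (i : Fin k),
      θ v i = (v i : K) := fun _ _ => rfl
  have hθinj : Function.Injective θ := by
    intro v w h
    funext i
    exact Subtype.ext (by rw [← hθapply v i, ← hθapply w i, h])
  set big : (∀ i : Fin k, Vsp b (γ (i : ℕ))) →ₗ[F] Matrix (Fin m) (Fin n) F :=
    Ψ ∘ₗ e.symm.toLinearMap ∘ₗ θ with hbigdef
  have hbiginj : Function.Injective big := by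
    simp only [hbigdef, LinearMap.coe_comp, LinearEquiv.coe_coe]
    exact hΨinj.comp (e.symm.injective.comp hθinj)
  have hmem : ∀ A ∈ LinearMap.range big, ∃ c : Fin k → K, A = Ψ c ∧
      (∀ i : Fin k, evAt (F := F) (η (Fin.castLE hkn.le i)) c ∈ Vsp b (γ (i : ℕ))) := by
    rintro A ⟨v, rfl⟩
    refine ⟨e.symm (θ v), rfl, ?_⟩
    intro i
    have h1 : Emap (e.symm (θ v)) = θ v := e.apply_symm_apply (θ v)
    have h2 := congrFun h1 i
    rw [hEapply] at h2
    rw [h2, hθapply]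
    exact (v i).2
  refine ⟨LinearMap.range big, ?_, ?_, ?_⟩
  · rw [LinearMap.finrank_range_of_inj hbiginj, Module.finrank_pi_fintype]
    rw [← Fin.sum_univ_eq_sum_range (fun i => γ i) k]
    exact Finset.sum_congr rfl fun i _ => finrank_Vsp b (hγD i i.2)
  · -- support
    intro A hA i j hij
    obtain ⟨c, rfl, hcV⟩ := hmem A hA
    rw [hΨapply, hΦapply]
    split
    next h =>
      rcases lt_trichotomy (j : ℕ) k with hj | hj | hj
      · have hjj : η j = η (Fin.castLE hkn.le ⟨(j : ℕ), hj⟩) := congrArg η (Fin.ext rfl)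
        rw [hjj]
        exact repr_eq_zero_of_mem_Vsp (hcV ⟨(j : ℕ), hj⟩) hij
      · have hjj : η j = η ⟨k, hkn⟩ := congrArg η (Fin.ext hj)
        rw [hjj]
        exact hcolk c hcV ⟨(i : ℕ), h⟩ (by rw [← hj]; exact hij)
      · exfalso
        have := hγDge j hj
        omega
    next h => rfl
  · -- rank
    intro A hA hA0
    obtain ⟨c, rfl, -⟩ := hmem A hA
    have hc0 : c ≠ 0 := fun h => hA0 (by rw [h, map_zero])
    rw [Matrix.rank_eq_finrank_span_cols]
    set L := lpoly (F := F) c Fin.val with hLdef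
    have hcols : (Ψ c)ᵀ = Φ ∘ L ∘ η := by
      funext j i
      rw [Matrix.transpose_apply, hΨapply]
      rfl
    rw [show Set.range (Ψ c).col = Set.range (Ψ c)ᵀ from rfl, hcols]
    have hrg : Set.range (Φ ∘ L ∘ η) = Φ '' (L '' (Set.range η)) := by
      rw [Set.range_comp, Set.range_comp]
    rw [hrg, Submodule.span_image, Submodule.span_image]
    set W := Submodule.span F (Set.range η) with hWdef
    rw [← (Submodule.equivMapOfInjective Φ hΦinj (Submodule.map L W)).finrank_eq]
    have h1 := LinearMap.finrank_range_add_finrank_ker (L.domRestrict W)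
    rw [LinearMap.range_domRestrict] at h1
    have h2 : Module.finrank F (LinearMap.ker (L.domRestrict W)) ≤
        Module.finrank F (LinearMap.ker L) := by
      refine LinearMap.finrank_le_finrank_of_injective
        (f := LinearMap.codRestrict (LinearMap.ker L)
          ((W.subtype ∘ₗ (LinearMap.ker (L.domRestrict W)).subtype)) ?_) ?_
      · intro x
        have hx := x.2
        rw [LinearMap.mem_ker] at hx ⊢
        exact hx
      · intro x y hxy
        have h3 := congrArg (Subtype.val) hxy
        simp only [LinearMap.codRestrict_apply, LinearMap.coe_comp, Function.comp_apply,
          Submodule.coe_subtype] at h3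
        exact Subtype.ext (Subtype.ext h3)
    have h3 := hker c hc0
    rw [← hLdef] at h3
    have h4 : n ≤ Module.finrank F W := hηspan
    omega

theorem regimeI [FiniteDimensional F K] {n k : ℕ} (b : Module.Basis (Fin n) F K) (β : K) (hb : ∀ t : Fin n, b t = β ^ (t : ℕ))
    (hk1 : 1 ≤ k) (hkn : k < n) :
    ∃ η : Fin n → K,
      LinearIndependent F (fun i : Fin k => η (Fin.castLE hkn.le i)) ∧
      Submodule.span F (Set.range η) = ⊤ ∧
      ∀ c : Fin k → K, evAt (F := F) (η ⟨k, hkn⟩) c =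
        ∑ i : Fin k, β ^ (k - (i : ℕ)) * evAt (F := F) (η (Fin.castLE hkn.le i)) c := by
  classical
  haveI : Finite K := Module.finite_of_finite F
  set q := Fintype.card F with hqdef
  have hn : Module.finrank F K = n := Module.finrank_eq_card_basis b ▸ (by simp)
  -- Frobenius as an equiv
  have hφbij : Function.Bijective (frobPowHom F K 1) :=
    (Finite.injective_iff_bijective).mp (frobPowHom F K 1).injective
  set φe : K ≃ K := Equiv.ofBijective _ hφbij with hφedef
  have hφe : ∀ x, φe x = x ^ q ^ 1 := fun x => rfl
  -- iterated inverse Frobenius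
  have hstep : ∀ (t : ℕ) (z : K), frobPowHom F K (t + 1) z = frobPowHom F K t (z ^ q ^ 1) := by
    intro t z
    rw [frobPowHom_apply, frobPowHom_apply, pow_one, ← pow_mul, ← pow_succ']
  have hfrob_symm : ∀ (a s : ℕ), s ≤ a → ∀ y : K,
      frobPowHom F K a ((φe.symm)^[s] y) = frobPowHom F K (a - s) y := by
    intro a s
    induction s generalizing a with
    | zero => intro _ y; simp
    | succ s ih =>
      intro hsa y
      rw [Function.iterate_succ_apply, ih (a := a) (by omega) (φe.symm y)]
      have h1 : a - s = (a - (s + 1)) + 1 := by omega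
      rw [h1, hstep, ← hφe, Equiv.apply_symm_apply]
  -- λ' vector
  set lam : Fin (k + 1) → K := fun i => if (i : ℕ) < k then β ^ (k - (i : ℕ)) else -1
    with hlamdef
  have hlamind : LinearIndependent F lam := by
    set idx : Fin (k + 1) → Fin n := fun i =>
      if h : (i : ℕ) < k then ⟨k - (i : ℕ), by omega⟩ else ⟨0, by omega⟩ with hidxdef
    have hidxinj : Function.Injective idx := by
      intro i j hij
      have hv := congrArg Fin.val hij
      have hi2 := i.2
      have hj2 := j.2
      apply Fin.ext
      by_cases hi : (i : ℕ) < k <;> by_cases hj : (j : ℕ) < k <;>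
        simp only [hidxdef, hi, hj, dite_true, dite_false] at hv <;> omega
    have hbase := (b.linearIndependent.comp idx hidxinj)
    set u : Fin (k + 1) → Fˣ := fun i => if (i : ℕ) < k then 1 else -1 with hudef
    have hlam_eq : lam = fun i => (u i : F) • (b ∘ idx) i := by
      funext i
      by_cases hi : (i : ℕ) < k
      · simp [hlamdef, hudef, hidxdef, hi, hb]
      · simp [hlamdef, hudef, hidxdef, hi, hb, pow_zero]
    rw [hlam_eq]
    exact hbase.units_smul u
  -- μ : nonzero solution of the Moore-type system
  set wfun : Fin k → Fin (k + 1) → K := fun s i => (φe.symm)^[(s : ℕ)] (lam i) with hwdef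
  obtain ⟨μ, hμker, hμ0⟩ : ∃ μ : Fin (k + 1) → K,
      (∀ s : Fin k, ∑ i, wfun s i * μ i = 0) ∧ μ ≠ 0 := by
    set Nlin : (Fin (k + 1) → K) →ₗ[K] (Fin k → K) :=
      LinearMap.pi (fun s : Fin k =>
        ∑ i, wfun s i • (LinearMap.proj i : (Fin (k + 1) → K) →ₗ[K] K)) with hNdef
    have hNapply : ∀ (x : Fin (k + 1) → K) (s : Fin k), Nlin x s = ∑ i, wfun s i * x i := by
      intro x s
      simp [hNdef, LinearMap.pi_apply, LinearMap.sum_apply, smul_eq_mul]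
    have hne : LinearMap.ker Nlin ≠ ⊥ := by
      intro h
      have hinj : Function.Injective Nlin := LinearMap.ker_eq_bot.mp h
      have hle := LinearMap.finrank_le_finrank_of_injective hinj
      rw [Module.finrank_pi, Module.finrank_pi, Fintype.card_fin, Fintype.card_fin] at hle
      omega
    obtain ⟨μ, hμmem, hμ0⟩ := (Submodule.ne_bot_iff _).mp hne
    refine ⟨μ, fun s => ?_, hμ0⟩
    rw [← hNapply μ s, LinearMap.mem_ker.mp hμmem]
    rfl
  have hμrel : ∀ s : ℕ, s < k → ∑ i, lam i * (μ i) ^ q ^ s = 0 := by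
    intro s hs
    have h0 := congrArg (frobPowHom F K s) (hμker ⟨s, hs⟩)
    rw [map_sum, map_zero] at h0
    rw [← h0]
    refine Finset.sum_congr rfl fun i _ => ?_
    rw [_root_.map_mul]
    simp only [hwdef]
    rw [hfrob_symm s s le_rfl]
    simp [frobPowHom_apply, hqdef]
  have hμind : LinearIndependent F μ := by
    rw [Fintype.linearIndependent_iff]
    intro a hsum
    by_contra hna
    push_neg at hna
    obtain ⟨i₀, hi₀⟩ := hna
    set r : Fin (k + 1) → (Fin (k + 1) → K) :=
      Fin.snoc wfun (fun i => algebraMap F K (a i)) with hrdef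
    have hrind : LinearIndependent K r := by
      rw [Fintype.linearIndependent_iff]
      intro d hd
      have hcomp : ∀ i : Fin (k + 1),
          (∑ s : Fin k, d (Fin.castSucc s) * wfun s i) +
            d (Fin.last k) * algebraMap F K (a i) = 0 := by
        intro i
        have h0 := congrFun hd i
        rw [Finset.sum_apply] at h0
        rw [Fin.sum_univ_castSucc] at h0
        simpa [hrdef, Fin.snoc_castSucc, Fin.snoc_last, smul_eq_mul] using h0
      set ψ := frobPowHom F K (k - 1) with hψdef
      set e0 := ψ (d (Fin.last k)) with he0def
      set DD : Fin k → K := fun j => ψ (d (Fin.castSucc (Fin.rev j))) with hDDdef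
      have hkey : ∀ i : Fin (k + 1),
          (∑ j : Fin k, DD j * (lam i) ^ q ^ (j : ℕ)) + e0 * algebraMap F K (a i) = 0 := by
        intro i
        have h2 : ∀ s : Fin k, ψ (d (Fin.castSucc s) * wfun s i)
            = ψ (d (Fin.castSucc s)) * (lam i) ^ q ^ (k - 1 - (s : ℕ)) := by
          intro s
          rw [_root_.map_mul]
          congr 1
          show ψ ((φe.symm)^[(s : ℕ)] (lam i)) = _
          rw [hψdef, hfrob_symm (k - 1) (s : ℕ) (by omega), frobPowHom_apply]
        have h1 := congrArg ψ (hcomp i)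
        rw [map_add, map_sum, _root_.map_mul, map_zero] at h1
        have hψa : ψ (algebraMap F K (a i)) = algebraMap F K (a i) := by
          rw [hψdef, frobPowHom_apply, qpow_algebraMap]
        rw [hψa] at h1
        rw [Finset.sum_congr rfl (fun s _ => h2 s)] at h1
        rw [← h1]
        congr 1
        refine Fintype.sum_equiv Fin.revPerm _ _ fun j => ?_
        have hv : (Fin.revPerm j : Fin k) = Fin.rev j := rfl
        rw [hv, hDDdef]
        congr 3
        rw [Fin.val_rev]
        omega
      -- the T-polynomial coefficients
      set DD' : ℕ → K := fun jv => if h : jv < k then DD ⟨jv, h⟩ else 0 with hDD'def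
      set cT : Fin (k + 1) → K := fun j =>
        e0 ^ q * DD' (j : ℕ) -
          e0 * (if (j : ℕ) = 0 then 0 else (DD' ((j : ℕ) - 1)) ^ q) with hcTdef
      have hfrob1 : ∀ x : K, (∑ j : Fin k, DD j * x ^ q ^ (j : ℕ)) ^ q
          = ∑ j : Fin k, (DD j) ^ q * x ^ q ^ ((j : ℕ) + 1) := by
        intro x
        have h := map_sum (frobPowHom F K 1) (fun j : Fin k => DD j * x ^ q ^ (j : ℕ))
          Finset.univ
        rw [frobPowHom_apply, pow_one] at h
        rw [h]
        refine Finset.sum_congr rfl fun j _ => ?_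
        rw [frobPowHom_apply, pow_one, mul_pow, ← pow_mul, ← pow_succ]
      have hTval : ∀ x : K, ∑ j : Fin (k + 1), cT j * x ^ q ^ (j : ℕ)
          = e0 ^ q * (∑ j : Fin k, DD j * x ^ q ^ (j : ℕ)) -
            e0 * (∑ j : Fin k, DD j * x ^ q ^ (j : ℕ)) ^ q := by
        intro x
        rw [hfrob1, Finset.mul_sum, Finset.mul_sum]
        simp only [hcTdef, sub_mul]
        rw [Finset.sum_sub_distrib]
        congr 1
        · rw [Fin.sum_univ_castSucc]
          have hlast0 : DD' k = 0 := by rw [hDD'def]; simp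
          simp only [hDD'def, Fin.coe_castSucc, Fin.is_lt, dite_true, Fin.val_last,
            lt_self_iff_false, dite_false, mul_zero, zero_mul, add_zero]
          refine Finset.sum_congr rfl fun j _ => ?_
          rw [mul_assoc, Fin.eta]
        · rw [Fin.sum_univ_succ]
          simp only [hDD'def, Fin.val_zero, Fin.val_succ, if_true, Nat.add_sub_cancel,
            Nat.succ_ne_zero, if_false, mul_zero, zero_mul, zero_add, Fin.is_lt, dite_true,
            Fin.eta]
          refine Finset.sum_congr rfl fun j _ => ?_
          rw [mul_assoc]
      have hTzero : ∀ i : Fin (k + 1), ∑ j : Fin (k + 1), cT j * (lam i) ^ q ^ (j : ℕ) = 0 := by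
        intro i
        rw [hTval]
        have hQ : ∑ j : Fin k, DD j * (lam i) ^ q ^ (j : ℕ)
            = -(e0 * algebraMap F K (a i)) := by
          have := hkey i
          linear_combination this
        rw [hQ]
        have hnegpow : (-(e0 * algebraMap F K (a i))) ^ q
            = -(e0 ^ q * algebraMap F K (a i)) := by
          have h3 := map_neg (frobPowHom F K 1) (e0 * algebraMap F K (a i))
          rw [frobPowHom_apply, frobPowHom_apply, pow_one] at h3
          rw [h3, mul_pow]
          have h4 := qpow_algebraMap (K := K) (a i) 1
          rw [pow_one] at h4
          rw [h4]
        rw [hnegpow]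
        ring
      have hlamrank : Module.finrank F (Submodule.span F (Set.range lam)) = k + 1 := by
        rw [finrank_span_eq_card hlamind, Fintype.card_fin]
      have hspan_zero : ∀ (cc : Fin (k+1) → K), (∀ i : Fin (k+1),
          ∑ j : Fin (k+1), cc j * (lam i) ^ q ^ (j : ℕ) = 0) →
          ∀ x ∈ Submodule.span F (Set.range lam),
            ∑ j : Fin (k+1), cc j * x ^ q ^ (j : ℕ) = 0 := by
        intro cc hcc x hx
        have hle : Submodule.span F (Set.range lam) ≤
            LinearMap.ker (lpoly (F := F) cc Fin.val) := by
          rw [Submodule.span_le]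
          rintro _ ⟨i, rfl⟩
          rw [SetLike.mem_coe, LinearMap.mem_ker, lpoly_apply]
          exact hcc i
        have := hle hx
        rw [LinearMap.mem_ker, lpoly_apply] at this
        exact this
      have hspan_zero' : ∀ (cc : Fin k → K), (∀ i : Fin (k+1),
          ∑ j : Fin k, cc j * (lam i) ^ q ^ (j : ℕ) = 0) →
          ∀ x ∈ Submodule.span F (Set.range lam),
            ∑ j : Fin k, cc j * x ^ q ^ (j : ℕ) = 0 := by
        intro cc hcc x hx
        have hle : Submodule.span F (Set.range lam) ≤
            LinearMap.ker (lpoly (F := F) cc Fin.val) := by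
          rw [Submodule.span_le]
          rintro _ ⟨i, rfl⟩
          rw [SetLike.mem_coe, LinearMap.mem_ker, lpoly_apply]
          exact hcc i
        have := hle hx
        rw [LinearMap.mem_ker, lpoly_apply] at this
        exact this
      have hcT0 : cT = 0 := by
        refine core (B := k) cT Fin.val Fin.val_injective (fun j => by have := j.2; omega)
          (Submodule.span F (Set.range lam)) (hspan_zero cT hTzero) (by omega)
      by_cases he : e0 = 0
      · -- Q itself vanishes, so all DD are zero, hence d = 0
        have hDD0 : DD = 0 := by
          refine core (B := k - 1) DD Fin.val Fin.val_injective (fun j => by have := j.2; omega)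
            (Submodule.span F (Set.range lam)) (hspan_zero' DD fun i => ?_) (by omega)
          have := hkey i
          rw [he, zero_mul, add_zero] at this
          exact this
        intro t
        have hψinj : Function.Injective ψ := (frobPowHom F K (k - 1)).injective
        refine Fin.lastCases ?_ ?_ t
        · apply hψinj
          rw [map_zero, ← he0def, he]
        · intro s
          apply hψinj
          rw [map_zero]
          have := congrFun hDD0 (Fin.rev s)
          rw [hDDdef] at this
          simpa [Fin.rev_rev] using this
      · -- e0 ≠ 0 leads to a = 0, contradiction
        exfalso
        have hDDall : ∀ (jv : ℕ) (h : jv < k), DD ⟨jv, h⟩ = 0 := by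
          intro jv
          induction jv using Nat.strong_induction_on with
          | _ jv ih =>
            intro h
            have hc := congrFun hcT0 ⟨jv, by omega⟩
            simp only [hcTdef, Pi.zero_apply] at hc
            by_cases h1 : jv = 0
            · rw [h1] at hc
              simp only [eq_self_iff_true, if_true, mul_zero, sub_zero, hDD'def] at hc
              rw [dif_pos (by omega : (0:ℕ) < k)] at hc
              rcases mul_eq_zero.mp hc with h2 | h2
              · exact absurd h2 (pow_ne_zero q he)
              · have : (⟨jv, h⟩ : Fin k) = ⟨0, by omega⟩ := by
                  apply Fin.ext
                  simp [h1]
                rw [this]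
                exact h2
            · have hprev : DD' (jv - 1) = 0 := by
                simp only [hDD'def]
                rw [dif_pos (by omega : jv - 1 < k)]
                exact ih (jv - 1) (by omega) (by omega)
              rw [if_neg h1, hprev] at hc
              rw [zero_pow (Fintype.card_ne_zero), mul_zero, sub_zero] at hc
              rcases mul_eq_zero.mp hc with h2 | h2
              · exact absurd h2 (pow_ne_zero q he)
              · simp only [hDD'def] at h2
                rw [dif_pos h] at h2
                exact h2
        have haz : ∀ i, a i = 0 := by
          intro i
          have hk2 := hkey i
          have hz : ∑ j : Fin k, DD j * lam i ^ q ^ (j : ℕ) = 0 := by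
            refine Finset.sum_eq_zero fun j _ => ?_
            have : DD j = 0 := hDDall j.val j.2
            rw [this, zero_mul]
          rw [hz, zero_add] at hk2
          rcases mul_eq_zero.mp hk2 with h2 | h2
          · exact absurd h2 he
          · exact (algebraMap F K).injective (by rw [h2, map_zero])
        exact hi₀ (haz i₀)
    -- rows span everything, so the functional x ↦ ∑ μᵢ xᵢ vanishes, forcing μ = 0
    have hrtop : Submodule.span K (Set.range r) = ⊤ := by
      apply Submodule.eq_top_of_finrank_eq
      rw [finrank_span_eq_card hrind, Fintype.card_fin, Module.finrank_pi, Fintype.card_fin]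
    set G : (Fin (k + 1) → K) →ₗ[K] K :=
      ∑ i, μ i • (LinearMap.proj i : (Fin (k + 1) → K) →ₗ[K] K) with hGdef
    have hGapply : ∀ x : Fin (k + 1) → K, G x = ∑ i, μ i * x i := by
      intro x
      simp [hGdef, smul_eq_mul]
    have hGr : ∀ s : Fin (k + 1), G (r s) = 0 := by
      intro s
      by_cases hs : (s : ℕ) < k
      · have hseq : s = Fin.castSucc ⟨(s : ℕ), hs⟩ := Fin.ext rfl
        rw [hseq, hrdef]
        rw [Fin.snoc_castSucc]
        rw [hGapply]
        rw [← hμker ⟨(s : ℕ), hs⟩]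
        exact Finset.sum_congr rfl fun i _ => mul_comm _ _
      · have hseq : s = Fin.last k := by
          apply Fin.ext
          rw [Fin.val_last]
          have := s.2
          omega
        rw [hseq, hrdef]
        rw [Fin.snoc_last]
        rw [hGapply]
        rw [← hsum]
        refine Finset.sum_congr rfl fun i _ => ?_
        rw [Algebra.smul_def, mul_comm]
    have hGzero : G = 0 := by
      have hle : Submodule.span K (Set.range r) ≤ LinearMap.ker G := by
        rw [Submodule.span_le]
        rintro _ ⟨s, rfl⟩
        rw [SetLike.mem_coe, LinearMap.mem_ker]
        exact hGr s
      rw [hrtop] at hle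
      ext x
      exact LinearMap.mem_ker.mp (hle Submodule.mem_top)
    have hμz : μ = 0 := by
      funext i
      have h5 := congrArg (fun (g : (Fin (k + 1) → K) →ₗ[K] K) => g (Pi.single i 1)) hGzero
      simp only [LinearMap.zero_apply] at h5
      rw [hGapply] at h5
      have h6 : ∑ j, μ j * (Pi.single i (1 : K) : Fin (k + 1) → K) j = μ i := by
        rw [Finset.sum_eq_single i]
        · simp
        · intro j _ hji
          rw [Pi.single_eq_of_ne hji, mul_zero]
        · intro hin
          exact absurd (Finset.mem_univ i) hin
      rw [h6] at h5
      simpa using h5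
    exact hμ0 hμz
  -- build η from μ and a complement basis
  set U : Submodule F K := Submodule.span F (Set.range μ) with hUdef
  obtain ⟨U', hcompl⟩ := Submodule.exists_isCompl U
  have hfrU : Module.finrank F U = k + 1 := by
    rw [hUdef, finrank_span_eq_card hμind, Fintype.card_fin]
  have hfrsum := Submodule.finrank_add_eq_of_isCompl hcompl
  have hfrU' : Module.finrank F U' = n - (k + 1) := by omega
  set w : Module.Basis (Fin (n - (k + 1))) F U' := (Module.finBasis F U').reindex (finCongr hfrU')
    with hwbdef
  set η : Fin n → K := fun j =>
    if h : (j : ℕ) < k + 1 then μ ⟨(j : ℕ), h⟩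
    else (w ⟨(j : ℕ) - (k + 1), by have := j.2; omega⟩ : K) with hηdef
  have hηsmall : ∀ (jv : ℕ) (h : jv < k + 1) (h2 : jv < n), η ⟨jv, h2⟩ = μ ⟨jv, h⟩ := by
    intro jv h h2
    simp only [hηdef]
    rw [dif_pos h]
  refine ⟨η, ?_, ?_, ?_⟩
  · have heq : (fun i : Fin k => η (Fin.castLE hkn.le i))
        = fun i : Fin k => μ (Fin.castLE (by omega : k ≤ k + 1) i) := by
      funext i
      have h0 := hηsmall (i : ℕ) (by omega) (by omega)
      convert h0 using 2 <;> exact Fin.ext rfl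
    rw [heq]
    exact hμind.comp _ (Fin.castLE_injective _)
  · have hU_le : U ≤ Submodule.span F (Set.range η) := by
      rw [hUdef, Submodule.span_le]
      rintro _ ⟨i, rfl⟩
      apply Submodule.subset_span
      refine ⟨⟨(i : ℕ), by have := i.2; omega⟩, ?_⟩
      rw [hηsmall (i : ℕ) i.2 (by have := i.2; omega)]
    have hU'_le : U' ≤ Submodule.span F (Set.range η) := by
      have hw : ∀ j : Fin (n - (k + 1)), (w j : K) ∈ Set.range η := by
        intro j
        refine ⟨⟨k + 1 + (j : ℕ), by have := j.2; omega⟩, ?_⟩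
        simp only [hηdef]
        rw [dif_neg (by omega)]
        exact congrArg (fun z => (w z : K)) (Fin.ext (by simp))
      intro x hx
      have hx2 : (⟨x, hx⟩ : U') ∈ Submodule.span F (Set.range w) := by
        rw [w.span_eq]
        trivial
      have h3 : x ∈ Submodule.map U'.subtype (Submodule.span F (Set.range w)) :=
        ⟨_, hx2, rfl⟩
      rw [Submodule.map_span] at h3
      refine Submodule.span_mono ?_ h3
      rintro _ ⟨_, ⟨j, rfl⟩, rfl⟩
      exact hw j
    rw [eq_top_iff]
    intro x _
    have hx : x ∈ U ⊔ U' := by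
      rw [hcompl.sup_eq_top]
      trivial
    obtain ⟨u, hu, u', hu', rfl⟩ := Submodule.mem_sup.mp hx
    exact Submodule.add_mem _ (hU_le hu) (hU'_le hu')
  · intro c
    have hlast : η ⟨k, hkn⟩ = μ (Fin.last k) := by
      rw [hηsmall k (by omega) hkn]
      exact congrArg μ (Fin.ext rfl)
    have hcs : ∀ i : Fin k, η (Fin.castLE hkn.le i) = μ (Fin.castSucc i) := by
      intro i
      have h0 := hηsmall (i : ℕ) (by omega) (by omega)
      convert h0 using 2 <;> exact Fin.ext rfl
    have hrel2 : ∀ s : ℕ, s < k → (μ (Fin.last k)) ^ q ^ s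
        = ∑ i : Fin k, β ^ (k - (i : ℕ)) * (μ (Fin.castSucc i)) ^ q ^ s := by
      intro s hs
      have h0 := hμrel s hs
      rw [Fin.sum_univ_castSucc] at h0
      have hlam_last : lam (Fin.last k) = -1 := by
        simp only [hlamdef, Fin.val_last, lt_self_iff_false, if_false]
      have hlam_cs : ∀ i : Fin k, lam (Fin.castSucc i) = β ^ (k - (i : ℕ)) := by
        intro i
        simp only [hlamdef, Fin.coe_castSucc, i.2, if_true]
      rw [hlam_last] at h0
      rw [Finset.sum_congr rfl (fun i _ => by rw [hlam_cs i])] at h0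
      rw [neg_one_mul, add_neg_eq_zero] at h0
      exact h0.symm
    rw [hlast, evAt_apply]
    have hterm : ∀ s : Fin k, c s * (μ (Fin.last k)) ^ q ^ (s : ℕ)
        = ∑ i : Fin k, β ^ (k - (i : ℕ)) * (c s * (μ (Fin.castSucc i)) ^ q ^ (s : ℕ)) := by
      intro s
      rw [hrel2 (s : ℕ) s.2, Finset.mul_sum]
      exact Finset.sum_congr rfl fun i _ => by ring
    rw [Finset.sum_congr rfl (fun s _ => hterm s)]
    rw [Finset.sum_comm]
    refine Finset.sum_congr rfl fun i _ => ?_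
    rw [← Finset.mul_sum, evAt_apply, hcs i]


end Stmt16Aux

open Stmt16Aux in
/-- Theorem 2.4: for n ≥ δ ≥ 2, k = n-δ+1, if (1) γ_k ≥ n or γ_k - k ≥ γ_i - i for all
i < k, and (2) γ_{k+1} ≥ n, then for every prime power q (any finite field F) there is
an optimal [F, Σ_{i<k} γ_i, δ]_q FDRM code. -/
theorem stmt16 {F : Type*} [Field F] [Fintype F] {m n δ k : ℕ}
    (hδ2 : 2 ≤ δ) (hδn : δ ≤ n) (hnm : n ≤ m) (hk : k = n - δ + 1)
    (γ : ℕ → ℕ) (hmono : ∀ i j, i ≤ j → j < n → γ i ≤ γ j)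
    (hγ0 : 1 ≤ γ 0) (hγm : ∀ j, j < n → γ j ≤ m)
    (h1 : n ≤ γ k ∨ ∀ i < k, (γ i : ℤ) - (i : ℤ) ≤ (γ k : ℤ) - (k : ℤ))
    (h2 : ∀ j, k + 1 ≤ j → j < n → n ≤ γ j) :
    ∃ C : Submodule F (Matrix (Fin m) (Fin n) F),
      Module.finrank F C = ∑ i ∈ Finset.range k, γ i ∧
      (∀ A ∈ C, ∀ (i : Fin m) (j : Fin n), γ (j : ℕ) ≤ (i : ℕ) → A i j = 0) ∧
      (∀ A ∈ C, A ≠ 0 → δ ≤ A.rank) := by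
  classical
  have hk1 : 1 ≤ k := by omega
  have hkn : k < n := by omega
  have hδ' : δ + k = n + 1 := by omega
  by_cases hreg : γ k < n
  · -- Regime I : D = n, use the Moore-type evaluation points
    have hineq : ∀ i < k, (γ i : ℤ) - (i : ℤ) ≤ (γ k : ℤ) - (k : ℤ) :=
      h1.resolve_left (by omega)
    set K := ExtF F n with hKdef
    have hfin : Module.finrank F K = n := ExtF.finrank F (by omega)
    set pb : PowerBasis F K := Field.powerBasisOfFiniteOfSeparable F K with hpbdef
    have hdim : pb.dim = n := by rw [← pb.finrank, hfin]
    set b : Module.Basis (Fin n) F K := pb.basis.reindex (finCongr hdim) with hbdef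
    have hb : ∀ t : Fin n, b t = pb.gen ^ (t : ℕ) := by
      intro t
      rw [hbdef, Module.Basis.reindex_apply, pb.coe_basis]
      rfl
    obtain ⟨η, hηind, hηtop, hident⟩ := regimeI b pb.gen hb hk1 hkn
    have hηspan : n ≤ Module.finrank F (Submodule.span F (Set.range η)) := by
      rw [hηtop, finrank_top, hfin]
    refine main_construction γ b η hk1 hkn hδ' hnm ?_ ?_ hηind hηspan ?_
    · intro i hi
      have := hmono i k (by omega) hkn
      omega
    · intro j hj
      exact h2 (j : ℕ) (by omega) j.2
    · intro c hcV t ht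
      rw [hident c]
      have hmemk : (∑ i : Fin k, pb.gen ^ (k - (i : ℕ)) *
          evAt (F := F) (η (Fin.castLE hkn.le i)) c) ∈ Vsp (F := F) b (γ k) := by
        apply Submodule.sum_mem
        intro i _
        have hi := i.2
        have hik := hineq (i : ℕ) hi
        have hmem1 : pb.gen ^ (k - (i : ℕ)) * evAt (F := F) (η (Fin.castLE hkn.le i)) c ∈
            Vsp (F := F) b (γ (i : ℕ) + (k - (i : ℕ))) :=
          Vsp_mul_pow b pb.gen hb (by omega) (hcV i)
        exact Vsp_mono b (by omega) hmem1
      exact repr_eq_zero_of_mem_Vsp hmemk ht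
  · -- Regime II : D = max n (γ (k-1)), plain Gabidulin-type code
    have hnk : n ≤ γ k := by omega
    set D := max n (γ (k - 1)) with hDdef
    have hDn : n ≤ D := le_max_left _ _
    have hDm : D ≤ m := max_le hnm (hγm (k - 1) (by omega))
    have hDγk : D ≤ γ k := max_le hnk (hmono (k - 1) k (by omega) hkn)
    set K := ExtF F D with hKdef
    have hfin : Module.finrank F K = D := ExtF.finrank F (by omega)
    set pb : PowerBasis F K := Field.powerBasisOfFiniteOfSeparable F K with hpbdef
    have hdim : pb.dim = D := by rw [← pb.finrank, hfin]
    set b : Module.Basis (Fin D) F K := pb.basis.reindex (finCongr hdim) with hbdef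
    set η : Fin n → K := fun j => b ⟨(j : ℕ), by have := j.2; omega⟩ with hηdef
    have hηindfull : LinearIndependent F η := by
      refine b.linearIndependent.comp (fun j : Fin n => ⟨(j : ℕ), by have := j.2; omega⟩)
        fun x y hxy => Fin.ext (by simpa [Fin.ext_iff] using hxy)
    have hηind : LinearIndependent F (fun i : Fin k => η (Fin.castLE hkn.le i)) :=
      hηindfull.comp _ (Fin.castLE_injective _)
    have hηspan : n ≤ Module.finrank F (Submodule.span F (Set.range η)) := by
      rw [finrank_span_eq_card hηindfull, Fintype.card_fin]
    refine main_construction γ b η hk1 hkn hδ' hDm ?_ ?_ hηind hηspan ?_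
    · intro i hi
      have := hmono i (k - 1) (by omega) (by omega)
      have := le_max_right n (γ (k - 1))
      omega
    · intro j hj
      have h3 := h2 (j : ℕ) (by omega) j.2
      have h4 := hmono (k - 1) (j : ℕ) (by omega) j.2
      exact max_le h3 h4
    · intro c hcV t ht
      exact absurd ht (by have := t.2; omega)
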